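/- Let H be a Hilbert space, (T_n) compact operators on H, and suppose: (i) ⟨T_n f − f, f⟩ → 0 for each f ∈ H, (ii) F ⊆ H is bounded and sup_{f∈F} |⟨T_n f − f, f⟩| → 0. Then every sequence in F that converges weakly in H converges in norm. -/

import Mathlib

open scoped InnerProductSpace
open Filter

/-- A compact operator maps weakly null bounded sequences to norm-null sequences. -/
lemma compact_maps_weak_to_norm
    {H : Type*} [NormedAddCommGroup H] [InnerProductSpace ℂ H] [CompleteSpace H]
    (S : H →L[ℂ] H) (hS : IsCompactOperator S) (h : ℕ → H) (R : ℝ)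
    (hb : ∀ j, ‖h j‖ ≤ R)
    (hw : ∀ v : H, Tendsto (fun j => ⟪h j, v⟫_ℂ) atTop (nhds 0)) :
    Tendsto (fun j => S (h j)) atTop (nhds 0) := by
  have hKc : IsCompact (closure (S '' Metric.closedBall 0 R)) :=
    hS.isCompact_closure_image_of_bounded Metric.isBounded_closedBall
  apply tendsto_of_subseq_tendsto
  intro ns hns
  have hmem : ∀ k, S (h (ns k)) ∈ closure (S '' Metric.closedBall 0 R) := fun k =>
    subset_closure ⟨h (ns k), by simpa [Metric.mem_closedBall, dist_eq_norm] using hb (ns k), rfl⟩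
  obtain ⟨y, -, ψ, hψ, hylim⟩ := hKc.tendsto_subseq hmem
  have hSweak : ∀ v : H, Tendsto (fun j => ⟪S (h j), v⟫_ℂ) atTop (nhds 0) := by
    intro v
    have := hw (ContinuousLinearMap.adjoint S v)
    simpa [ContinuousLinearMap.adjoint_inner_right] using this
  have hy0 : y = 0 := by
    have h1 : Tendsto (fun k => ⟪S (h (ns (ψ k))), y⟫_ℂ) atTop (nhds ⟪y, y⟫_ℂ) :=
      hylim.inner tendsto_const_nhds
    have h2 : Tendsto (fun k => ⟪S (h (ns (ψ k))), y⟫_ℂ) atTop (nhds 0) :=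
      (hSweak y).comp (hns.comp hψ.tendsto_atTop)
    have : ⟪y, y⟫_ℂ = 0 := tendsto_nhds_unique h1 h2
    exact inner_self_eq_zero.mp this
  exact ⟨ψ, hy0 ▸ hylim⟩

/-- Key step in the reverse direction of the Hilbert-space Riesz–Kolmogorov criterion:
if `(T n)` are compact operators with `⟪T n f - f, f⟫ → 0` for each `f`, `F` is bounded and
`sup_{f ∈ F} |⟪T n f - f, f⟫| → 0`, then every sequence in `F` that converges weakly
converges in norm. -/
theorem weak_to_norm_convergence_in_F
    {H : Type*} [NormedAddCommGroup H] [InnerProductSpace ℂ H] [CompleteSpace H]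
    (T : ℕ → H →L[ℂ] H) (hT : ∀ n, IsCompactOperator (T n))
    (hconv : ∀ f : H,
      Filter.Tendsto (fun n => ⟪T n f - f, f⟫_ℂ) Filter.atTop (nhds 0))
    (F : Set H) (hF : Bornology.IsBounded F)
    (huniform : ∀ ε > 0, ∃ N : ℕ, ∀ n ≥ N, ∀ f ∈ F, ‖⟪T n f - f, f⟫_ℂ‖ < ε) :
    ∀ (g : ℕ → H) (f : H), (∀ j, g j ∈ F) →
      (∀ h : H, Filter.Tendsto (fun j => ⟪g j, h⟫_ℂ) Filter.atTop (nhds ⟪f, h⟫_ℂ)) →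
      Filter.Tendsto g Filter.atTop (nhds f) := by
  intro g f hgF hgweak
  obtain ⟨C, hC⟩ := hF.subset_closedBall 0
  have hgnorm : ∀ j, ‖g j‖ ≤ C := by
    intro j
    have := hC (hgF j)
    simpa [Metric.mem_closedBall, dist_eq_norm] using this
  set R : ℝ := C + ‖f‖ with hR
  have hb : ∀ j, ‖g j - f‖ ≤ R := fun j =>
    (norm_sub_le _ _).trans (add_le_add_left (hgnorm j) _)
  have hRnn : 0 ≤ R := le_trans (norm_nonneg (g 0 - f)) (hb 0)
  have hw : ∀ v : H, Tendsto (fun j => ⟪g j - f, v⟫_ℂ) atTop (nhds 0) := by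
    intro v
    have := (hgweak v).sub (tendsto_const_nhds (x := ⟪f, v⟫_ℂ))
    simpa [inner_sub_left] using this
  rw [Metric.tendsto_atTop]
  intro ε hε
  set δ : ℝ := ε ^ 2 / 8 with hδdef
  have hδ : 0 < δ := by positivity
  obtain ⟨N1, hN1⟩ := huniform δ hδ
  have hconvf := (hconv f).norm
  rw [Metric.tendsto_atTop] at hconvf
  obtain ⟨N2, hN2⟩ := hconvf δ hδ
  set n : ℕ := max N1 N2 with hn
  have hA : ∀ j, ‖⟪T n (g j) - g j, g j⟫_ℂ‖ < δ :=
    fun j => hN1 n (le_max_left _ _) (g j) (hgF j)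
  have hD : ‖⟪T n f - f, f⟫_ℂ‖ < δ := by
    have := hN2 n (le_max_right _ _)
    simpa [Real.dist_eq, abs_of_nonneg (norm_nonneg _)] using this
  -- compact term
  have hcomp : Tendsto (fun j => T n (g j - f)) atTop (nhds 0) :=
    compact_maps_weak_to_norm (T n) (hT n) _ R hb hw
  have hcomp' : ∀ᶠ j in atTop, ‖T n (g j - f)‖ < δ / (R + 1) := by
    have h1 : Tendsto (fun j => ‖T n (g j - f)‖) atTop (nhds 0) := by
      simpa using hcomp.norm
    exact h1.eventually_lt_const (by positivity)
  -- cross term 1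
  have hB : Tendsto (fun j => ⟪T n (g j) - g j, f⟫_ℂ) atTop (nhds ⟪T n f - f, f⟫_ℂ) := by
    have h1 := hgweak (ContinuousLinearMap.adjoint (T n) f)
    have h2 := hgweak f
    have h3 := h1.sub h2
    have he : ∀ j, ⟪g j, ContinuousLinearMap.adjoint (T n) f⟫_ℂ - ⟪g j, f⟫_ℂ
        = ⟪T n (g j) - g j, f⟫_ℂ := by
      intro j
      rw [ContinuousLinearMap.adjoint_inner_right, inner_sub_left]
    have he' : ⟪f, ContinuousLinearMap.adjoint (T n) f⟫_ℂ - ⟪f, f⟫_ℂ = ⟪T n f - f, f⟫_ℂ := by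
      rw [ContinuousLinearMap.adjoint_inner_right, inner_sub_left]
    rw [he'] at h3
    exact h3.congr he
  -- cross term 2
  have hCC : Tendsto (fun j => ⟪T n f - f, g j⟫_ℂ) atTop (nhds ⟪T n f - f, f⟫_ℂ) := by
    have h1 := ((Complex.continuous_conj.tendsto _).comp (hgweak (T n f - f)))
    have he : ∀ j, (starRingEnd ℂ) ⟪g j, T n f - f⟫_ℂ = ⟪T n f - f, g j⟫_ℂ := fun j =>
      inner_conj_symm _ _
    have he' : (starRingEnd ℂ) ⟪f, T n f - f⟫_ℂ = ⟪T n f - f, f⟫_ℂ := inner_conj_symm _ _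
    rw [← he']
    exact h1.congr he
  have hB' : ∀ᶠ j in atTop, ‖⟪T n (g j) - g j, f⟫_ℂ‖ < 2 * δ :=
    hB.norm.eventually_lt_const (lt_of_lt_of_le hD (by linarith))
  have hCC' : ∀ᶠ j in atTop, ‖⟪T n f - f, g j⟫_ℂ‖ < 2 * δ :=
    hCC.norm.eventually_lt_const (lt_of_lt_of_le hD (by linarith))
  obtain ⟨N, hNall⟩ := eventually_atTop.mp ((hcomp'.and hB').and hCC')
  refine ⟨N, fun j hj => ?_⟩
  obtain ⟨⟨hc1, hc2⟩, hc3⟩ := hNall j hj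
  set h := g j - f with hh
  -- decomposition of the quadratic form
  have hdec : ⟪T n h - h, h⟫_ℂ
      = ⟪T n (g j) - g j, g j⟫_ℂ - ⟪T n (g j) - g j, f⟫_ℂ
        - ⟪T n f - f, g j⟫_ℂ + ⟪T n f - f, f⟫_ℂ := by
    simp only [hh, map_sub, inner_sub_left, inner_sub_right]
    ring
  have hdecnorm : ‖⟪T n h - h, h⟫_ℂ‖ ≤ 6 * δ := by
    calc ‖⟪T n h - h, h⟫_ℂ‖
        ≤ ‖⟪T n (g j) - g j, g j⟫_ℂ‖ + ‖⟪T n (g j) - g j, f⟫_ℂ‖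
          + ‖⟪T n f - f, g j⟫_ℂ‖ + ‖⟪T n f - f, f⟫_ℂ‖ := by
          rw [hdec]
          exact le_trans (norm_add_le _ _) (by
            gcongr
            exact le_trans (norm_sub_le _ _) (by gcongr; exact norm_sub_le _ _))
      _ ≤ 6 * δ := by
          have := (hA j).le
          linarith [hc2.le, hc3.le, hD.le]
  -- key identity
  have hkey : ‖h‖ ^ 2 = Complex.re ⟪h, T n h⟫_ℂ - Complex.re ⟪T n h - h, h⟫_ℂ := by
    have e1 : ⟪T n h - h, h⟫_ℂ = ⟪T n h, h⟫_ℂ - ⟪h, h⟫_ℂ := inner_sub_left _ _ _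
    have e2 : Complex.re ⟪T n h, h⟫_ℂ = Complex.re ⟪h, T n h⟫_ℂ := by
      rw [← inner_conj_symm (𝕜 := ℂ) (T n h) h]
      exact Complex.conj_re _
    have e3 : Complex.re ⟪h, h⟫_ℂ = ‖h‖ ^ 2 := by
      simpa [RCLike.re_to_complex] using inner_self_eq_norm_sq (𝕜 := ℂ) h
    rw [e1, Complex.sub_re, e2, e3]
    ring
  have hbd1 : Complex.re ⟪h, T n h⟫_ℂ ≤ δ := by
    have habs : Complex.re ⟪h, T n h⟫_ℂ ≤ ‖⟪h, T n h⟫_ℂ‖ := Complex.re_le_norm _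
    have : ‖⟪h, T n h⟫_ℂ‖ ≤ ‖h‖ * ‖T n h‖ := norm_inner_le_norm _ _
    have h4 : ‖h‖ * ‖T n h‖ ≤ R * (δ / (R + 1)) := by
      apply mul_le_mul (hb j) hc1.le (norm_nonneg _) hRnn
    have h5 : R * (δ / (R + 1)) ≤ δ := by
      calc R * (δ / (R + 1)) ≤ (R + 1) * (δ / (R + 1)) := by
            gcongr
            linarith
        _ = δ := by field_simp
    linarith
  have hbd2 : -Complex.re ⟪T n h - h, h⟫_ℂ ≤ 6 * δ := by
    have := (neg_le_abs (Complex.re ⟪T n h - h, h⟫_ℂ)).trans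
      ((Complex.abs_re_le_norm _).trans hdecnorm)
    linarith [this]
  have hsq : ‖h‖ ^ 2 < ε ^ 2 := by
    have : ‖h‖ ^ 2 ≤ 7 * δ := by rw [hkey]; linarith
    have h7 : (7 : ℝ) * δ < ε ^ 2 := by rw [hδdef]; nlinarith
    linarith
  have : ‖h‖ < ε := by nlinarith [norm_nonneg h]
  simpa [dist_eq_norm, hh] using this
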